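/- (Lemma 2, Green potential form) Let μ be a finite Borel measure on the open unit disc B(0,1) ⊂ ℂ, and let w(z) = ∫_{B(0,1)} (log|1 − conj(ζ)·z| − log|z − ζ|) dμ(ζ) be its Green potential, so w ≥ 0 on the closed unit disc and w = 0 on the unit circle. Let v : B̄(0,1) → ℝ be a function with v ≥ w on B̄(0,1), let z₁ be a point with |z₁| = 1 such that v(z₁) = 0, and assume v is differentiable at z₁ (as a function on a neighborhood of z₁ in ℂ). Then |∇v(z₁)| ≥ (1/3)·μ(B̄(0,1/2)). -/

import Mathlib

open MeasureTheory Metric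

namespace GreenPotentialAux

open Set

lemma green_sq_identity (z ζ : ℂ) :
    ‖1 - (starRingEnd ℂ) ζ * z‖ ^ 2 - ‖z - ζ‖ ^ 2
      = (1 - ‖z‖ ^ 2) * (1 - ‖ζ‖ ^ 2) := by
  simp only [Complex.sq_norm, Complex.normSq_apply, Complex.sub_re, Complex.sub_im,
    Complex.mul_re, Complex.mul_im, Complex.one_re, Complex.one_im, Complex.conj_re,
    Complex.conj_im]
  ring

lemma green_nonneg {z ζ : ℂ} (hz : ‖z‖ < 1) (hζ : ‖ζ‖ < 1) (hne : z ≠ ζ) :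
    0 ≤ Real.log (‖1 - (starRingEnd ℂ) ζ * z‖) - Real.log (‖z - ζ‖) := by
  have hid := green_sq_identity z ζ
  set A := ‖1 - (starRingEnd ℂ) ζ * z‖ with hA
  set B := ‖z - ζ‖ with hB
  have hA0 : 0 ≤ A := norm_nonneg _
  have hB00 : 0 ≤ B := norm_nonneg _
  have hB0 : 0 < B := by
    simpa [hB, sub_eq_zero] using hne
  have hz0 : 0 ≤ ‖z‖ := norm_nonneg _
  have hζ0 : 0 ≤ ‖ζ‖ := norm_nonneg _
  have hpos : 0 < (1 - ‖z‖ ^ 2) * (1 - ‖ζ‖ ^ 2) :=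
    mul_pos (by nlinarith [pow_lt_one₀ hz0 hz (two_ne_zero)])
      (by nlinarith [pow_lt_one₀ hζ0 hζ (two_ne_zero)])
  have hBA : B ≤ A := by
    by_contra h
    push_neg at h
    have := mul_pos (sub_pos.2 h) (add_pos_of_nonneg_of_pos hA0 hB0)
    nlinarith
  have := Real.log_le_log hB0 hBA
  linarith

lemma green_lower {z ζ : ℂ} (hζ : ‖ζ‖ ≤ 1/2) (hz1 : 1/2 < ‖z‖)
    (hz2 : ‖z‖ < 1) :
    (1 - ‖z‖ ^ 2) / 6 ≤
      Real.log (‖1 - (starRingEnd ℂ) ζ * z‖) - Real.log (‖z - ζ‖) := by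
  have hid := green_sq_identity z ζ
  set A := ‖1 - (starRingEnd ℂ) ζ * z‖ with hA
  set B := ‖z - ζ‖ with hB
  have hz0 : 0 ≤ ‖z‖ := norm_nonneg _
  have hζ0 : 0 ≤ ‖ζ‖ := norm_nonneg _
  have hA0' : 0 ≤ A := norm_nonneg _
  have hB00 : 0 ≤ B := norm_nonneg _
  have hX : 0 ≤ 1 - ‖z‖ ^ 2 := by nlinarith [pow_lt_one₀ hz0 hz2 (two_ne_zero)]
  have hY : 3/4 ≤ 1 - ‖ζ‖ ^ 2 := by nlinarith
  have hB0 : 0 < B := by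
    have h1 : ‖z‖ - ‖ζ‖ ≤ B := by
      simpa [hB] using norm_sub_norm_le z ζ
    linarith
  have hA2 : 0 < A ^ 2 := by nlinarith
  have hA0 : 0 < A := by
    rcases hA0'.lt_or_eq with h | h
    · exact h
    · rw [← h] at hA2; norm_num at hA2
  have hAle : A ≤ 3/2 := by
    have h1 : A ≤ ‖(1:ℂ)‖ + ‖(starRingEnd ℂ) ζ * z‖ := by
      simpa [hA] using norm_sub_le (1:ℂ) ((starRingEnd ℂ) ζ * z)
    have h2 : ‖(starRingEnd ℂ) ζ * z‖ = ‖ζ‖ * ‖z‖ := by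
      simp [map_mul]
    rw [h2] at h1
    simp only [norm_one] at h1
    nlinarith
  have hBA : B ≤ A := by
    by_contra h
    push_neg at h
    have := mul_pos (sub_pos.2 h) (add_pos_of_nonneg_of_pos hA0' hB0)
    nlinarith
  have hlog : Real.log B - Real.log A ≤ B / A - 1 := by
    rw [← Real.log_div hB0.ne' hA0.ne']
    exact (Real.log_le_sub_one_of_pos (div_pos hB0 hA0))
  have key : (1 - ‖z‖ ^ 2) * (3/4) ≤ (A - B) * (A + B) := by
    nlinarith [mul_nonneg hX (by linarith : (0:ℝ) ≤ (1 - ‖ζ‖ ^ 2) - 3/4)]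
  have h4 : (1 - ‖z‖ ^ 2) / 4 ≤ A - B := by
    nlinarith [mul_nonneg (sub_nonneg.2 hBA) (by linarith : (0:ℝ) ≤ 3 - (A + B))]
  have h2 : (1 - ‖z‖ ^ 2) / 6 ≤ (A - B) / A := by
    rw [le_div_iff₀ hA0]
    nlinarith [mul_le_mul_of_nonneg_left hAle (by linarith : (0:ℝ) ≤ (1 - ‖z‖ ^ 2) / 6)]
  have h3 : (A - B) / A = 1 - B / A := by field_simp
  linarith

lemma rpow_neg_half_of_neg {u : ℝ} (hu : u < 0) : u ^ (-(1/2) : ℝ) = 0 := by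
  rw [Real.rpow_def_of_neg hu]
  have : (-(1/2) : ℝ) * Real.pi = -(Real.pi / 2) := by ring
  rw [this, Real.cos_neg, Real.cos_pi_div_two, mul_zero]

lemma rpow_neg_half_nonneg (u : ℝ) : 0 ≤ u ^ (-(1/2) : ℝ) := by
  rcases lt_or_ge u 0 with h | h
  · rw [rpow_neg_half_of_neg h]
  · exact Real.rpow_nonneg h _

lemma measurable_rpow_neg_half : Measurable fun s : ℝ => s ^ (-(1/2):ℝ) :=
  measurable_of_continuousOn_compl_singleton 0
    (ContinuousOn.rpow_const continuousOn_id (fun x hx => Or.inl hx))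

lemma abs_rpow_split (u : ℝ) :
    |u| ^ (-(1/2) : ℝ) = u ^ (-(1/2) : ℝ) + (-u) ^ (-(1/2) : ℝ) := by
  rcases lt_trichotomy u 0 with h | h | h
  · rw [abs_of_neg h, rpow_neg_half_of_neg h, zero_add]
  · simp [h, Real.zero_rpow (by norm_num : (-(1/2):ℝ) ≠ 0)]
  · rw [abs_of_pos h, rpow_neg_half_of_neg (by linarith : -u < 0), add_zero]

lemma neg_log_le_rpow {x : ℝ} (hx : 0 < x) : -Real.log x ≤ 2 * x ^ (-(1/2) : ℝ) := by
  have h1 : Real.log (x ^ (-(1/2) : ℝ)) = (-(1/2)) * Real.log x := Real.log_rpow hx _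
  have h2 : Real.log (x ^ (-(1/2) : ℝ)) ≤ x ^ (-(1/2) : ℝ) - 1 :=
    Real.log_le_sub_one_of_pos (Real.rpow_pos_of_pos hx _)
  nlinarith [Real.rpow_pos_of_pos hx (-(1/2) : ℝ)]

noncomputable def Cst : ENNReal :=
  ∫⁻ s in Ioo (-2:ℝ) 2, ENNReal.ofReal (2 * (s ^ (-(1/2):ℝ) + (-s) ^ (-(1/2):ℝ)))

lemma Cst_lt_top : Cst < ⊤ := by
  have hpt : ∀ s : ℝ, ENNReal.ofReal (2 * (s ^ (-(1/2):ℝ) + (-s) ^ (-(1/2):ℝ)))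
      = ENNReal.ofReal (2 * s ^ (-(1/2):ℝ)) + ENNReal.ofReal (2 * (-s) ^ (-(1/2):ℝ)) := by
    intro s
    rw [mul_add, ENNReal.ofReal_add (by nlinarith [rpow_neg_half_nonneg s]) (by nlinarith [rpow_neg_half_nonneg (-s)])]
  have hmeas : Measurable fun s : ℝ => ENNReal.ofReal (2 * s ^ (-(1/2):ℝ)) :=
    ((measurable_rpow_neg_half).const_mul 2).ennreal_ofReal
  have hsplit : Cst = (∫⁻ s in Ioo (-2:ℝ) 2, ENNReal.ofReal (2 * s ^ (-(1/2):ℝ)))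
      + ∫⁻ s in Ioo (-2:ℝ) 2, ENNReal.ofReal (2 * (-s) ^ (-(1/2):ℝ)) := by
    rw [Cst]
    simp_rw [hpt]
    rw [lintegral_add_left hmeas]
  have hint : IntegrableOn (fun s : ℝ => 2 * s ^ (-(1/2):ℝ)) (Ioo (-2:ℝ) 2) volume := by
    have h1 : IntervalIntegrable (fun x:ℝ => x ^ (-(1/2):ℝ)) volume (-2) 2 :=
      intervalIntegral.intervalIntegrable_rpow' (by norm_num)
    rw [intervalIntegrable_iff, uIoc_of_le (by norm_num : (-2:ℝ) ≤ 2)] at h1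
    exact (h1.mono_set Ioo_subset_Ioc_self).const_mul 2
  have h1 : (∫⁻ s in Ioo (-2:ℝ) 2, ENNReal.ofReal (2 * s ^ (-(1/2):ℝ))) < ⊤ :=
    hint.setLIntegral_lt_top
  have hneg : (∫⁻ s in Ioo (-2:ℝ) 2, ENNReal.ofReal (2 * (-s) ^ (-(1/2):ℝ)))
      = ∫⁻ s in Ioo (-2:ℝ) 2, ENNReal.ofReal (2 * s ^ (-(1/2):ℝ)) := by
    have mp : MeasurePreserving (fun s : ℝ => -s) volume volume :=
      Measure.measurePreserving_neg _
    have emb : MeasurableEmbedding (fun s : ℝ => -s) :=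
      (Homeomorph.neg ℝ).toMeasurableEquiv.measurableEmbedding
    have := mp.setLIntegral_comp_preimage_emb emb
      (fun x => ENNReal.ofReal (2 * x ^ (-(1/2):ℝ))) (Ioo (-2:ℝ) 2)
    have hpre : (fun s : ℝ => -s) ⁻¹' Ioo (-2:ℝ) 2 = Ioo (-2:ℝ) 2 := by
      ext x
      simp only [mem_preimage, mem_Ioo]
      constructor <;> rintro ⟨a, b⟩ <;> constructor <;> linarith
    rwa [hpre] at this
  rw [hsplit, hneg]
  exact ENNReal.add_lt_top.2 ⟨h1, h1⟩

lemma inner_bound {z₁ : ℂ} (hz₁ : ‖z₁‖ = 1) {ζ : ℂ} (hζ : ‖ζ‖ < 1) :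
    (∫⁻ r in Ioo (1/2:ℝ) 1,
      ENNReal.ofReal (-Real.log (‖(r:ℂ) * z₁ - ζ‖))) ≤ Cst := by
  set t : ℝ := ((starRingEnd ℂ) z₁ * ζ).re with ht_def
  have ht : |t| < 1 := by
    have h1 : |t| ≤ ‖(starRingEnd ℂ) z₁ * ζ‖ := Complex.abs_re_le_norm _
    rw [norm_mul, Complex.norm_conj, hz₁, one_mul] at h1; exact lt_of_le_of_lt h1 hζ
  -- pointwise bound off r = t
  have hpt : ∀ r : ℝ, r ≠ t →
      ENNReal.ofReal (-Real.log (‖(r:ℂ) * z₁ - ζ‖))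
        ≤ ENNReal.ofReal (2 * ((r - t) ^ (-(1/2):ℝ) + (t - r) ^ (-(1/2):ℝ))) := by
    intro r hr
    have hconj : (starRingEnd ℂ) z₁ * ((r:ℂ) * z₁ - ζ) = (r:ℂ) - (starRingEnd ℂ) z₁ * ζ := by
      have h2 : (starRingEnd ℂ) z₁ * z₁ = 1 := by
        rw [Complex.conj_mul']
        rw [hz₁]
        norm_num
      calc (starRingEnd ℂ) z₁ * ((r:ℂ) * z₁ - ζ)
          = (r:ℂ) * ((starRingEnd ℂ) z₁ * z₁) - (starRingEnd ℂ) z₁ * ζ := by ring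
        _ = (r:ℂ) - (starRingEnd ℂ) z₁ * ζ := by rw [h2]; ring
    have hre : ((starRingEnd ℂ) z₁ * ((r:ℂ) * z₁ - ζ)).re = r - t := by
      rw [hconj]
      simp [Complex.sub_re, Complex.ofReal_re, ht_def]
    have hkey : |r - t| ≤ ‖(r:ℂ) * z₁ - ζ‖ := by
      calc |r - t| = |((starRingEnd ℂ) z₁ * ((r:ℂ) * z₁ - ζ)).re| := by rw [hre]
        _ ≤ ‖(starRingEnd ℂ) z₁ * ((r:ℂ) * z₁ - ζ)‖ := Complex.abs_re_le_norm _
        _ = ‖(r:ℂ) * z₁ - ζ‖ := by rw [norm_mul, Complex.norm_conj, hz₁, one_mul]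
    have hrt : 0 < |r - t| := abs_pos.2 (sub_ne_zero.2 hr)
    apply ENNReal.ofReal_le_ofReal
    calc -Real.log (‖(r:ℂ) * z₁ - ζ‖)
        ≤ -Real.log |r - t| := by
          have := Real.log_le_log hrt hkey
          linarith
      _ ≤ 2 * |r - t| ^ (-(1/2):ℝ) := neg_log_le_rpow hrt
      _ = 2 * ((r - t) ^ (-(1/2):ℝ) + (t - r) ^ (-(1/2):ℝ)) := by
          rw [abs_rpow_split (r - t)]
          ring_nf
  -- a.e. bound on restricted measure
  have hae : ∀ᵐ (r : ℝ) ∂(volume.restrict (Ioo (1/2:ℝ) 1)),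
      ENNReal.ofReal (-Real.log (‖(r:ℂ) * z₁ - ζ‖))
        ≤ ENNReal.ofReal (2 * ((r - t) ^ (-(1/2):ℝ) + (t - r) ^ (-(1/2):ℝ))) := by
    have h0 : ∀ᵐ r ∂(volume : Measure ℝ), r ≠ t := by
      rw [ae_iff]
      have : {r : ℝ | ¬ r ≠ t} = {t} := by ext x; simp
      rw [this]
      exact Real.volume_singleton
    exact (ae_restrict_of_ae h0).mono fun r hr => hpt r hr
  calc (∫⁻ r in Ioo (1/2:ℝ) 1, ENNReal.ofReal (-Real.log (‖(r:ℂ) * z₁ - ζ‖)))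
      ≤ ∫⁻ r in Ioo (1/2:ℝ) 1,
          ENNReal.ofReal (2 * ((r - t) ^ (-(1/2):ℝ) + (t - r) ^ (-(1/2):ℝ))) :=
        lintegral_mono_ae hae
    _ ≤ ∫⁻ r in Ioo (t - 2) (t + 2),
          ENNReal.ofReal (2 * ((r - t) ^ (-(1/2):ℝ) + (t - r) ^ (-(1/2):ℝ))) := by
        apply lintegral_mono_set
        intro x hx
        simp only [mem_Ioo] at *
        cases abs_lt.1 ht
        constructor <;> linarith [hx.1, hx.2]
    _ = Cst := by
        have mp : MeasurePreserving (fun s : ℝ => s + t) volume volume :=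
          measurePreserving_add_right volume t
        have emb : MeasurableEmbedding (fun s : ℝ => s + t) :=
          (Homeomorph.addRight t).toMeasurableEquiv.measurableEmbedding
        have h := mp.setLIntegral_comp_preimage_emb emb
          (fun r => ENNReal.ofReal (2 * ((r - t) ^ (-(1/2):ℝ) + (t - r) ^ (-(1/2):ℝ))))
          (Ioo (t - 2) (t + 2))
        have hpre : (fun s : ℝ => s + t) ⁻¹' Ioo (t - 2) (t + 2) = Ioo (-2:ℝ) 2 := by
          ext x
          simp only [mem_preimage, mem_Ioo]
          constructor <;> rintro ⟨a, b⟩ <;> constructor <;> linarith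
        rw [hpre] at h
        rw [← h, Cst]
        apply lintegral_congr
        intro s
        have e1 : s + t - t = s := by ring
        have e2 : t - (s + t) = -s := by ring
        rw [e1, e2]

lemma good_r_ae (μ : Measure ℂ) [IsFiniteMeasure μ] (hμ : μ (ball (0:ℂ) 1)ᶜ = 0)
    {z₁ : ℂ} (hz₁ : ‖z₁‖ = 1) :
    ∀ᵐ (r : ℝ) ∂(volume.restrict (Ioo (1/2:ℝ) 1)),
      (∫⁻ ζ, ENNReal.ofReal (-Real.log (‖(r:ℂ) * z₁ - ζ‖)) ∂μ) < ⊤ := by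
  have haeball : ∀ᵐ ζ ∂μ, ζ ∈ ball (0:ℂ) 1 := by
    rw [ae_iff]
    exact hμ
  have hFm : Measurable (fun p : ℝ × ℂ =>
      ENNReal.ofReal (-Real.log (‖(p.1:ℂ) * z₁ - p.2‖))) := by
    apply Measurable.ennreal_ofReal
    apply Measurable.neg
    apply Real.measurable_log.comp
    apply Continuous.measurable
    exact continuous_norm.comp
      (((Complex.continuous_ofReal.comp continuous_fst).mul continuous_const).sub continuous_snd)
  have hswap : (∫⁻ r in Ioo (1/2:ℝ) 1,
        ∫⁻ ζ, ENNReal.ofReal (-Real.log (‖(r:ℂ) * z₁ - ζ‖)) ∂μ)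
      = ∫⁻ ζ, (∫⁻ r in Ioo (1/2:ℝ) 1,
        ENNReal.ofReal (-Real.log (‖(r:ℂ) * z₁ - ζ‖))) ∂μ :=
    lintegral_lintegral_swap hFm.aemeasurable
  have hbound : (∫⁻ ζ, (∫⁻ r in Ioo (1/2:ℝ) 1,
        ENNReal.ofReal (-Real.log (‖(r:ℂ) * z₁ - ζ‖))) ∂μ)
      ≤ Cst * μ univ := by
    calc _ ≤ ∫⁻ _ζ, Cst ∂μ := by
          apply lintegral_mono_ae
          filter_upwards [haeball] with ζ hζ
          exact inner_bound hz₁ (by simpa [Complex.dist_eq] using hζ)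
      _ = Cst * μ univ := lintegral_const _
  have hfin : (∫⁻ r in Ioo (1/2:ℝ) 1,
        ∫⁻ ζ, ENNReal.ofReal (-Real.log (‖(r:ℂ) * z₁ - ζ‖)) ∂μ) ≠ ⊤ := by
    rw [hswap]
    exact ne_top_of_le_ne_top (ENNReal.mul_lt_top Cst_lt_top (measure_lt_top μ univ)).ne hbound
  have hm : Measurable fun r : ℝ =>
      ∫⁻ ζ, ENNReal.ofReal (-Real.log (‖(r:ℂ) * z₁ - ζ‖)) ∂μ :=
    Measurable.lintegral_prod_right
      (f := fun (r:ℝ) (ζ:ℂ) => ENNReal.ofReal (-Real.log (‖(r:ℂ) * z₁ - ζ‖))) hFm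
  exact ae_lt_top hm hfin

lemma w_lower (μ : Measure ℂ) [IsFiniteMeasure μ] (hμ : μ (ball (0:ℂ) 1)ᶜ = 0)
    {z₁ : ℂ} (hz₁ : ‖z₁‖ = 1) {r : ℝ} (hr1 : 1/2 < r) (hr2 : r < 1)
    (hfin : (∫⁻ ζ, ENNReal.ofReal (-Real.log (‖(r:ℂ) * z₁ - ζ‖)) ∂μ) < ⊤)
    (hatom : μ {((r:ℂ) * z₁)} = 0) :
    (1 - r^2)/6 * (μ (closedBall (0:ℂ) (1/2))).toReal ≤
      ∫ ζ, (Real.log (‖1 - (starRingEnd ℂ) ζ * ((r:ℂ)*z₁)‖)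
        - Real.log (‖(r:ℂ)*z₁ - ζ‖)) ∂μ := by
  set z : ℂ := (r:ℂ) * z₁ with hz_def
  have hr0 : 0 < r := by linarith
  have habs : ‖z‖ = r := by
    rw [hz_def, norm_mul, Complex.norm_real, Real.norm_eq_abs, hz₁, mul_one, abs_of_pos hr0]
  have haeball : ∀ᵐ ζ ∂μ, ζ ∈ ball (0:ℂ) 1 := by
    rw [ae_iff]; exact hμ
  have haeabs : ∀ᵐ ζ ∂μ, ‖ζ‖ < 1 := by
    filter_upwards [haeball] with ζ hζ
    simpa [Complex.dist_eq] using hζ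
  have hane : ∀ᵐ ζ ∂μ, ζ ≠ z := by
    rw [ae_iff]
    have : {ζ : ℂ | ¬ ζ ≠ z} = {z} := by ext x; simp
    rw [this]; exact hatom
  -- measurability
  have hm1 : Measurable fun ζ : ℂ => Real.log (‖1 - (starRingEnd ℂ) ζ * z‖) := by
    apply Real.measurable_log.comp
    apply Continuous.measurable
    exact continuous_norm.comp
      (continuous_const.sub ((Complex.continuous_conj).mul continuous_const))
  have hm2 : Measurable fun ζ : ℂ => Real.log (‖z - ζ‖) := by
    apply Real.measurable_log.comp
    apply Continuous.measurable
    exact continuous_norm.comp (continuous_const.sub continuous_id)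
  -- integrability of the first term
  have hint1 : Integrable (fun ζ : ℂ => Real.log (‖1 - (starRingEnd ℂ) ζ * z‖)) μ := by
    refine Integrable.mono' (integrable_const (max (-Real.log (1 - r)) (Real.log 2)))
      hm1.aestronglyMeasurable ?_
    filter_upwards [haeabs] with ζ hζ
    set x : ℝ := ‖1 - (starRingEnd ℂ) ζ * z‖ with hx_def
    have hζ0 : 0 ≤ ‖ζ‖ := norm_nonneg _
    have hprod : ‖(starRingEnd ℂ) ζ * z‖ = ‖ζ‖ * r := by
      rw [norm_mul, Complex.norm_conj, habs]
    have hx1 : 1 - r ≤ x := by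
      have h := norm_sub_norm_le (1:ℂ) ((starRingEnd ℂ) ζ * z)
      simp only [norm_one] at h
      rw [hprod] at h
      have : ‖ζ‖ * r ≤ r := by nlinarith
      have hxx : 1 - ‖ζ‖ * r ≤ x := h
      linarith
    have hx2 : x ≤ 2 := by
      have h := norm_sub_le (1:ℂ) ((starRingEnd ℂ) ζ * z)
      simp only [norm_one] at h
      rw [hprod] at h
      nlinarith
    have hx0 : 0 < x := by linarith
    rw [Real.norm_eq_abs, abs_le]
    constructor
    · have h := Real.log_le_log (by linarith : (0:ℝ) < 1 - r) hx1
      have : -Real.log x ≤ -Real.log (1 - r) := by linarith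
      have h2 : -Real.log (1 - r) ≤ max (-Real.log (1 - r)) (Real.log 2) := le_max_left _ _
      linarith
    · have h := Real.log_le_log hx0 hx2
      exact le_trans h (le_max_right _ _)
  -- integrability of the negative-part majorant
  have hgnn : ∀ ζ : ℂ, 0 ≤ max 0 (-Real.log (‖z - ζ‖)) := fun ζ => le_max_left _ _
  have hg : Integrable (fun ζ : ℂ => max 0 (-Real.log (‖z - ζ‖))) μ := by
    constructor
    · exact ((measurable_const.max hm2.neg)).aestronglyMeasurable
    · rw [hasFiniteIntegral_iff_ofReal (ae_of_all _ hgnn)]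
      have : ∀ ζ : ℂ, ENNReal.ofReal (max 0 (-Real.log (‖z - ζ‖)))
          = ENNReal.ofReal (-Real.log (‖z - ζ‖)) := by
        intro ζ
        rcases le_or_gt (-Real.log (‖z - ζ‖)) 0 with h | h
        · rw [max_eq_left h, ENNReal.ofReal_zero,
            ENNReal.ofReal_eq_zero.2 h]
        · rw [max_eq_right h.le]
      simp_rw [this]
      exact hfin
  -- integrability of second term
  have hint2 : Integrable (fun ζ : ℂ => Real.log (‖z - ζ‖)) μ := by
    refine Integrable.mono'
      ((integrable_const (Real.log 2)).add hg) hm2.aestronglyMeasurable ?_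
    filter_upwards [haeabs] with ζ hζ
    set x : ℝ := ‖z - ζ‖ with hx_def
    have hx0 : 0 ≤ x := norm_nonneg _
    have hx2 : x ≤ 2 := by
      have h := norm_sub_le z ζ
      rw [habs] at h
      have hζ0 : 0 ≤ ‖ζ‖ := norm_nonneg _
      calc x ≤ r + ‖ζ‖ := h
        _ ≤ 2 := by linarith
    have hlog2 : Real.log x ≤ Real.log 2 := by
      rcases hx0.lt_or_eq with h | h
      · exact Real.log_le_log h hx2
      · rw [← h, Real.log_zero]; exact Real.log_nonneg one_le_two
    rw [Real.norm_eq_abs, abs_le]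
    constructor
    · have h1 : -Real.log x ≤ max 0 (-Real.log x) := le_max_right _ _
      have h2 : (0:ℝ) ≤ Real.log 2 := Real.log_nonneg one_le_two
      simp only [Pi.add_apply]
      linarith
    · have h1 : (0:ℝ) ≤ max 0 (-Real.log x) := le_max_left _ _
      simp only [Pi.add_apply]
      linarith
  have hIf : Integrable (fun ζ : ℂ => Real.log (‖1 - (starRingEnd ℂ) ζ * z‖)
      - Real.log (‖z - ζ‖)) μ := hint1.sub hint2
  -- indicator lower bound
  set K : Set ℂ := closedBall (0:ℂ) (1/2) with hK_def
  have hKm : MeasurableSet K := measurableSet_closedBall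
  have hInd : Integrable (K.indicator fun _ : ℂ => (1 - r^2)/6) μ :=
    (integrable_const _).indicator hKm
  have hle : (K.indicator fun _ : ℂ => (1 - r^2)/6) ≤ᵐ[μ]
      fun ζ : ℂ => Real.log (‖1 - (starRingEnd ℂ) ζ * z‖)
        - Real.log (‖z - ζ‖) := by
    filter_upwards [haeabs, hane] with ζ hζ hne
    by_cases hKζ : ζ ∈ K
    · rw [indicator_of_mem hKζ]
      have hζhalf : ‖ζ‖ ≤ 1/2 := by
        simpa [hK_def, Complex.dist_eq] using hKζ
      have := green_lower (z := z) hζhalf (by rw [habs]; exact hr1) (by rw [habs]; exact hr2)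
      rwa [habs] at this
    · rw [indicator_of_notMem hKζ]
      exact green_nonneg (by rw [habs]; exact hr2) hζ (Ne.symm hne)
  have hmono := integral_mono_ae hInd hIf hle
  have hind_val : ∫ ζ, (K.indicator fun _ : ℂ => (1 - r^2)/6) ζ ∂μ
      = (μ K).toReal * ((1 - r^2)/6) := by
    rw [integral_indicator_const _ hKm]
    simp [smul_eq_mul, measureReal_def]
  rw [hind_val] at hmono
  calc (1 - r^2)/6 * (μ K).toReal = (μ K).toReal * ((1 - r^2)/6) := by ring
    _ ≤ _ := hmono

end GreenPotentialAux

open GreenPotentialAux Set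

/-- Lemma 2 (Green potential form): if `w` is the Green potential of a finite measure
`μ` supported in the unit disc, `v ≥ w` on the closed unit disc, `v(z₁) = 0` at a point
`z₁` of the unit circle, and `v` is differentiable at `z₁`, then
`|∇v(z₁)| ≥ (1/3) μ(B̄(0,1/2))`. -/
theorem green_potential_gradient_bound
    (μ : Measure ℂ) [IsFiniteMeasure μ] (hμ : μ (ball (0:ℂ) 1)ᶜ = 0)
    (w v : ℂ → ℝ)
    (hw : ∀ z : ℂ, w z = ∫ ζ, (Real.log (‖1 - (starRingEnd ℂ) ζ * z‖)
        - Real.log (‖z - ζ‖)) ∂μ)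
    (hvw : ∀ z ∈ closedBall (0:ℂ) 1, w z ≤ v z)
    (z₁ : ℂ) (hz₁ : ‖z₁‖ = 1) (hv₁ : v z₁ = 0)
    (hv : DifferentiableAt ℝ v z₁) :
    (1 / 3) * (μ (closedBall (0:ℂ) (1 / 2))).toReal ≤ ‖fderiv ℝ v z₁‖ := by
  set c : ℝ := (μ (closedBall (0:ℂ) (1 / 2))).toReal with hc_def
  have hc0 : 0 ≤ c := ENNReal.toReal_nonneg
  set D := fderiv ℝ v z₁ with hD_def
  -- atoms on the ray are countable
  have haeatom : ∀ᵐ (r : ℝ) ∂(volume.restrict (Ioo (1/2:ℝ) 1)), μ {((r:ℂ) * z₁)} = 0 := by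
    have hz₁0 : z₁ ≠ 0 := by
      intro h; rw [h] at hz₁; simp at hz₁
    have hcnt : Set.Countable {r : ℝ | 0 < μ {((r:ℂ) * z₁)}} := by
      refine Measure.countable_meas_pos_of_disjoint_iUnion
        (As := fun r : ℝ => {((r:ℂ) * z₁)})
        (fun _ => measurableSet_singleton _) ?_
      intro r s hrs
      simp only [Function.onFun, disjoint_singleton]
      intro h
      exact absurd (Complex.ofReal_inj.1 (mul_right_cancel₀ hz₁0 h)) hrs
    have hnull : volume {r : ℝ | 0 < μ {((r:ℂ) * z₁)}} = 0 := hcnt.measure_zero _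
    apply ae_restrict_of_ae
    rw [ae_iff]
    convert hnull using 2
    ext r
    simp [pos_iff_ne_zero]
  have hboth := (good_r_ae μ hμ hz₁).and haeatom
  -- reduce to ε-approximation
  apply le_of_forall_pos_le_add
  intro ε hε
  -- differentiability: little-o bound
  have hlo := hv.hasFDerivAt.isLittleO
  have hev := Asymptotics.isLittleO_iff.mp hlo (half_pos hε)
  rw [Metric.eventually_nhds_iff] at hev
  obtain ⟨δ, hδ0, hδ⟩ := hev
  set δ' : ℝ := min δ (min (1/2) (3*ε/(c+1))) with hδ'_def
  have hδ'0 : 0 < δ' := by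
    apply lt_min hδ0
    apply lt_min (by norm_num)
    positivity
  set a : ℝ := max (1/2) (1 - δ') with ha_def
  have ha1 : a < 1 := by
    apply max_lt (by norm_num)
    linarith
  have ha_half : (1/2 : ℝ) ≤ a := le_max_left _ _
  -- find a good radius r
  have hex : ∃ r ∈ Ioo a 1,
      (∫⁻ ζ, ENNReal.ofReal (-Real.log (‖(r:ℂ) * z₁ - ζ‖)) ∂μ) < ⊤
        ∧ μ {((r:ℂ) * z₁)} = 0 := by
    by_contra h
    push_neg at h
    have hnull := ae_iff.1 hboth
    have hsub : Ioo a 1 ⊆ {r : ℝ | ¬ ((∫⁻ ζ, ENNReal.ofReal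
        (-Real.log (‖(r:ℂ) * z₁ - ζ‖)) ∂μ) < ⊤
        ∧ μ {((r:ℂ) * z₁)} = 0)} := by
      intro r hr
      simp only [mem_setOf_eq]
      intro hcontr
      exact absurd hcontr.2 (h r hr hcontr.1)
    have h0 : (volume.restrict (Ioo (1/2:ℝ) 1)) (Ioo a 1) = 0 :=
      measure_mono_null hsub hnull
    rw [Measure.restrict_apply measurableSet_Ioo] at h0
    have hinter : Ioo a 1 ∩ Ioo (1/2:ℝ) 1 = Ioo a 1 :=
      inter_eq_left.2 (Ioo_subset_Ioo ha_half le_rfl)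
    rw [hinter, Real.volume_Ioo] at h0
    have := ENNReal.ofReal_eq_zero.1 h0
    linarith
  obtain ⟨r, ⟨hra, hr1⟩, hfin, hatom⟩ := hex
  have hr_half : 1/2 < r := lt_of_le_of_lt ha_half hra
  have hr0 : 0 < r := by linarith
  set z : ℂ := (r:ℂ) * z₁ with hz_def
  have habs : ‖z‖ = r := by
    rw [hz_def, norm_mul, Complex.norm_real, Real.norm_eq_abs, hz₁, mul_one, abs_of_pos hr0]
  -- lower bound on w z
  have hwz : (1 - r^2)/6 * c ≤ w z := by
    rw [hw z]
    exact w_lower μ hμ hz₁ hr_half hr1 hfin hatom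
  -- upper bound on v z
  have hzmem : z ∈ closedBall (0:ℂ) 1 := by
    simp only [mem_closedBall, Complex.dist_eq, sub_zero, habs]
    linarith
  have hwv : w z ≤ v z := hvw z hzmem
  have hdist : ‖z - z₁‖ = 1 - r := by
    have : z - z₁ = ((r - 1 : ℝ) : ℂ) * z₁ := by
      rw [hz_def]; push_cast; ring
    rw [this]
    rw [norm_mul, Complex.norm_real, Real.norm_eq_abs, hz₁, mul_one]
    rw [abs_of_neg (by linarith : r - 1 < 0)]
    ring
  have hvz : v z ≤ (‖D‖ + ε/2) * (1 - r) := by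
    have hd : dist z z₁ < δ := by
      rw [dist_eq_norm, hdist]
      have : δ' ≤ δ := min_le_left _ _
      have h1r : 1 - r < δ' := by
        have : 1 - δ' ≤ a := le_max_right _ _
        linarith
      linarith
    have hb := hδ hd
    rw [hv₁, sub_zero, hdist] at hb
    have h1 : v z - D (z - z₁) ≤ |v z - D (z - z₁)| := le_abs_self _
    have h2 : |v z - D (z - z₁)| ≤ ε/2 * (1 - r) := by
      rw [← Real.norm_eq_abs]
      exact hb
    have h3 : D (z - z₁) ≤ ‖D‖ * ‖z - z₁‖ := by
      calc D (z - z₁) ≤ |D (z - z₁)| := le_abs_self _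
        _ = ‖D (z - z₁)‖ := (Real.norm_eq_abs _).symm
        _ ≤ ‖D‖ * ‖z - z₁‖ := D.le_opNorm _
    rw [hdist] at h3
    nlinarith
  -- combine
  have hcomb : (1 - r^2)/6 * c ≤ (‖D‖ + ε/2) * (1 - r) := le_trans hwz (le_trans hwv hvz)
  have h1r : 0 < 1 - r := by linarith
  have hdiv : (1 + r)/6 * c ≤ ‖D‖ + ε/2 := by
    have hfact : (1 - r^2)/6 * c = ((1 + r)/6 * c) * (1 - r) := by ring
    rw [hfact] at hcomb
    exact le_of_mul_le_mul_right hcomb h1r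
  have hsmall : (1 - r) * c / 6 ≤ ε/2 := by
    have h1rδ : 1 - r < δ' := by
      have : 1 - δ' ≤ a := le_max_right _ _
      linarith
    have hδ'3 : δ' ≤ 3*ε/(c+1) := le_trans (min_le_right _ _) (min_le_right _ _)
    have hc1 : 0 < c + 1 := by linarith
    have h3 : 1 - r ≤ 3*ε/(c+1) := by linarith
    have h4 : (1 - r) * (c+1) ≤ 3*ε := (le_div_iff₀ hc1).1 h3
    have h5 : (1 - r) * c ≤ (1 - r) * (c+1) :=
      mul_le_mul_of_nonneg_left (by linarith) (by linarith)
    linarith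
  calc (1/3) * c = (1 + r)/6 * c + (1 - r) * c / 6 := by ring
    _ ≤ (‖D‖ + ε/2) + ε/2 := add_le_add hdiv hsmall
    _ = ‖D‖ + ε := by ring
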